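/- Let P⁺ and P⁻ be mutually singular probability measures, β ∈ (0,1), γ ∈ (0,1], P_m = β P⁺ + (1−β) P⁻, and η = γ/(1−β+βγ). For any probability measure P_g, define the generator value L_G(P_g) = (γa/(2η))·(1/2)‖P⁺ − η P_g − (1−η) P⁻‖_TV for a > 0. Then L_G(P_g) ≥ γa(1−η)/(2η), with equality when P_g = P⁺. -/

import Mathlib

open MeasureTheory Set

/-- Total variation norm of a signed measure: `‖μ‖_TV = |μ|(X)`. -/
noncomputable def tv {X : Type*} [MeasurableSpace X] (μ : SignedMeasure X) : ℝ :=
  (μ.totalVariation Set.univ).toReal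

lemma tv_ge_apply {X : Type*} [MeasurableSpace X] (s : SignedMeasure X) {S : Set X}
    (hS : MeasurableSet S) : s S - s Sᶜ ≤ tv s := by
  set j := s.toJordanDecomposition with hj
  have hfin₁ : j.posPart univ ≠ ⊤ := measure_ne_top _ _
  have hfin₂ : j.negPart univ ≠ ⊤ := measure_ne_top _ _
  have hs : ∀ A : Set X, MeasurableSet A →
      s A = (j.posPart A).toReal - (j.negPart A).toReal := by
    intro A hA
    conv_lhs => rw [← s.toSignedMeasure_toJordanDecomposition]
    rw [JordanDecomposition.toSignedMeasure, VectorMeasure.sub_apply,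
      Measure.toSignedMeasure_apply_measurable hA, Measure.toSignedMeasure_apply_measurable hA]
    rfl
  rw [hs S hS, hs Sᶜ hS.compl]
  have htv : tv s = (j.posPart univ).toReal + (j.negPart univ).toReal := by
    rw [tv, SignedMeasure.totalVariation, Measure.add_apply, ENNReal.toReal_add hfin₁ hfin₂]
  rw [htv]
  have h1 : (j.posPart S).toReal ≤ (j.posPart univ).toReal :=
    ENNReal.toReal_mono hfin₁ (measure_mono (subset_univ _))
  have h2 : (j.negPart Sᶜ).toReal ≤ (j.negPart univ).toReal :=
    ENNReal.toReal_mono hfin₂ (measure_mono (subset_univ _))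
  have h3 : 0 ≤ (j.negPart S).toReal := ENNReal.toReal_nonneg
  have h4 : 0 ≤ (j.posPart Sᶜ).toReal := ENNReal.toReal_nonneg
  linarith

lemma tv_smul_sub {X : Type*} [MeasurableSpace X] (Pp Pn : Measure X)
    [IsFiniteMeasure Pp] [IsFiniteMeasure Pn] (h : Pp ⟂ₘ Pn) (r : ℝ) (hr : 0 ≤ r) :
    tv (r • (Pp.toSignedMeasure - Pn.toSignedMeasure)) =
      r * ((Pp univ).toReal + (Pn univ).toReal) := by
  set j : JordanDecomposition X := ⟨Pp, Pn, h⟩ with hj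
  have hjs : j.toSignedMeasure = Pp.toSignedMeasure - Pn.toSignedMeasure := rfl
  have hJd : (r • (Pp.toSignedMeasure - Pn.toSignedMeasure)).toJordanDecomposition = r • j := by
    rw [← hjs, SignedMeasure.toJordanDecomposition_smul_real,
      JordanDecomposition.toJordanDecomposition_toSignedMeasure]
  rw [tv, SignedMeasure.totalVariation, hJd,
    JordanDecomposition.real_smul_posPart_nonneg _ _ hr,
    JordanDecomposition.real_smul_negPart_nonneg _ _ hr]
  show ((r.toNNReal • Pp + r.toNNReal • Pn : Measure X) univ).toReal = _
  rw [Measure.add_apply, ENNReal.toReal_add (measure_ne_top _ _) (measure_ne_top _ _)]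
  simp only [Measure.smul_apply, ENNReal.toReal_smul, NNReal.smul_def, smul_eq_mul,
    Real.coe_toNNReal _ hr]
  ring

/-- For mutually singular `P⁺, P⁻`, `η = γ/(1-β+βγ)` and
`L_G(P_g) = (γa/(2η))·(1/2)‖P⁺ - ηP_g - (1-η)P⁻‖_TV`:
`L_G(P_g) ≥ γa(1-η)/(2η)` with equality when `P_g = P⁺`. -/
theorem stmt10 {X : Type*} [MeasurableSpace X] (Pp Pn Pg : Measure X)
    [IsProbabilityMeasure Pp] [IsProbabilityMeasure Pn] [IsProbabilityMeasure Pg]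
    (S : Set X) (hS : MeasurableSet S) (hSp : Pp S = 1) (hSn : Pn S = 0)
    (a β γ η : ℝ) (ha : 0 < a) (hβ : β ∈ Set.Ioo (0 : ℝ) 1) (hγ : γ ∈ Set.Ioc (0 : ℝ) 1)
    (hη : η = γ / (1 - β + β * γ)) :
    (γ * a / (2 * η)) * ((1 / 2) * tv (Pp.toSignedMeasure - η • Pg.toSignedMeasure
        - (1 - η) • Pn.toSignedMeasure)) ≥ γ * a * (1 - η) / (2 * η) ∧
    (γ * a / (2 * η)) * ((1 / 2) * tv (Pp.toSignedMeasure - η • Pp.toSignedMeasure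
        - (1 - η) • Pn.toSignedMeasure)) = γ * a * (1 - η) / (2 * η) := by
  obtain ⟨hβ0, hβ1⟩ := hβ
  obtain ⟨hγ0, hγ1⟩ := hγ
  have hd : 0 < 1 - β + β * γ := by nlinarith
  have hη0 : 0 < η := by rw [hη]; positivity
  have hη1 : η ≤ 1 := by
    rw [hη, div_le_one hd]; nlinarith
  have hPpc : Pp Sᶜ = 0 := by
    have := measure_compl hS (by simp : Pp S ≠ ⊤)
    rw [hSp] at this; simp [this]
  have hPnc : Pn Sᶜ = 1 := by
    have := measure_compl hS (by simp : Pn S ≠ ⊤)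
    rw [hSn] at this; simp [this]
  have hc : 0 < γ * a / (2 * η) := by positivity
  constructor
  · -- lower bound
    set s : SignedMeasure X := Pp.toSignedMeasure - η • Pg.toSignedMeasure
      - (1 - η) • Pn.toSignedMeasure with hs
    have happ : ∀ A : Set X, MeasurableSet A →
        s A = (Pp A).toReal - η * (Pg A).toReal - (1 - η) * (Pn A).toReal := by
      intro A hA
      rw [hs, VectorMeasure.sub_apply, VectorMeasure.sub_apply, VectorMeasure.smul_apply,
        VectorMeasure.smul_apply, Measure.toSignedMeasure_apply_measurable hA,
        Measure.toSignedMeasure_apply_measurable hA, Measure.toSignedMeasure_apply_measurable hA,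
        smul_eq_mul, smul_eq_mul]
      rfl
    have hSv : s S = 1 - η * (Pg S).toReal := by
      rw [happ S hS, hSp, hSn]; norm_num
    have hScv : s Sᶜ = - η * (Pg Sᶜ).toReal - (1 - η) := by
      rw [happ Sᶜ hS.compl, hPpc, hPnc]; norm_num
    have hle : 2 * (1 - η) ≤ tv s := by
      have h := tv_ge_apply s hS
      have hg1 : (Pg S).toReal ≤ 1 := by
        have : Pg S ≤ 1 := prob_le_one
        simpa using ENNReal.toReal_mono (by simp) this
      have hg2 : 0 ≤ (Pg Sᶜ).toReal := ENNReal.toReal_nonneg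
      rw [hSv, hScv] at h
      nlinarith
    have := mul_le_mul_of_nonneg_left hle hc.le
    calc γ * a * (1 - η) / (2 * η) = (γ * a / (2 * η)) * ((1/2) * (2 * (1 - η))) := by
          field_simp
      _ ≤ _ := by
          apply mul_le_mul_of_nonneg_left _ hc.le
          nlinarith
  · -- equality
    have hsing : Pp ⟂ₘ Pn := ⟨Sᶜ, hS.compl, hPpc, by rwa [compl_compl]⟩
    have hrw : Pp.toSignedMeasure - η • Pp.toSignedMeasure - (1 - η) • Pn.toSignedMeasure
        = (1 - η) • (Pp.toSignedMeasure - Pn.toSignedMeasure) := by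
      ext A hA
      rw [VectorMeasure.sub_apply, VectorMeasure.sub_apply, VectorMeasure.smul_apply,
        VectorMeasure.smul_apply, VectorMeasure.smul_apply, VectorMeasure.sub_apply,
        smul_eq_mul, smul_eq_mul, smul_eq_mul]
      ring
    rw [hrw, tv_smul_sub Pp Pn hsing (1 - η) (by linarith)]
    simp only [measure_univ, ENNReal.toReal_one]
    field_simp
    ring
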